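/- Let D be a triangulated category and let B, C be strict full triangulated subcategories of D with Hom_D(B,C) = 0 for all B ∈ B, C ∈ C. Suppose B → A → C → B[1] and B' → A → C' → B'[1] are two distinguished triangles with B, B' ∈ B and C, C' ∈ C, with the same middle object A. Then there exists a unique morphism φ : B → B' commuting with the maps to A, and φ is an isomorphism; similarly there is a unique morphism ψ : C → C' commuting with the maps from A, and ψ is an isomorphism. -/

import Mathlib

open CategoryTheory Limits Pretriangulated

universe v u

namespace CategoryTheory.Triangulated

/-- The pre-2025 Mathlib notion of a triangulated subcategory (removed since). -/
structure Subcategory (C : Type*) [Category C] [HasZeroObject C] [HasShift C ℤ] [Preadditive C]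
    [∀ n : ℤ, (shiftFunctor C n).Additive] [Pretriangulated C] where
  P : C → Prop
  zero' : ∃ (Z : C) (_ : IsZero Z), P Z
  shift (X : C) (n : ℤ) : P X → P (X⟦n⟧)
  ext₂' (T : Triangle C) (_ : T ∈ distTriang C) : P T.obj₁ → P T.obj₃ →
    ∃ (Y : C) (_ : P Y), Nonempty (T.obj₂ ≅ Y)

end CategoryTheory.Triangulated

section Aux

variable {D : Type u} [Category.{v} D] [HasZeroObject D] [HasShift D ℤ] [Preadditive D]
    [∀ n : ℤ, (shiftFunctor D n).Additive] [Pretriangulated D]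
    (B C : Triangulated.Subcategory D)
    (horth : ∀ (X Y : D), B.P X → C.P Y → ∀ f : X ⟶ Y, f = 0)

include horth in
lemma aux_phi {A B₁ B₂ C₁ C₂ : D} (hB₁ : B.P B₁) (hC₂ : C.P C₂)
    (f₁ : B₁ ⟶ A) (g₁ : A ⟶ C₁) (h₁ : C₁ ⟶ B₁⟦(1 : ℤ)⟧)
    (hT₁ : Triangle.mk f₁ g₁ h₁ ∈ distTriang D)
    (f₂ : B₂ ⟶ A) (g₂ : A ⟶ C₂) (h₂ : C₂ ⟶ B₂⟦(1 : ℤ)⟧)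
    (hT₂ : Triangle.mk f₂ g₂ h₂ ∈ distTriang D) :
    ∃! φ : B₁ ⟶ B₂, φ ≫ f₂ = f₁ := by
  have h0 : f₁ ≫ g₂ = 0 := horth _ _ hB₁ hC₂ _
  obtain ⟨φ, hφ⟩ : ∃ φ : B₁ ⟶ B₂, f₁ = φ ≫ f₂ := Triangle.coyoneda_exact₂ _ hT₂ f₁ h0
  refine ⟨φ, hφ.symm, ?_⟩
  intro φ' hφ'
  have hd : (φ' - φ) ≫ f₂ = 0 := by
    simp [Preadditive.sub_comp, hφ', ← hφ]
  obtain ⟨g, hg⟩ : ∃ g : B₁ ⟶ C₂⟦(-1 : ℤ)⟧, φ' - φ = g ≫ (Triangle.invRotate (Triangle.mk f₂ g₂ h₂)).mor₁ := Triangle.coyoneda_exact₂ _ (inv_rot_of_distTriang _ hT₂) (φ' - φ) hd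
  have : g = 0 := horth _ _ hB₁ (C.shift _ (-1) hC₂) g
  rw [this] at hg
  replace hg : φ' - φ = 0 := hg.trans zero_comp
  rw [sub_eq_zero] at hg
  exact hg

include horth in
lemma aux_psi {A B₁ B₂ C₁ C₂ : D} (hB₁ : B.P B₁) (hC₂ : C.P C₂)
    (f₁ : B₁ ⟶ A) (g₁ : A ⟶ C₁) (h₁ : C₁ ⟶ B₁⟦(1 : ℤ)⟧)
    (hT₁ : Triangle.mk f₁ g₁ h₁ ∈ distTriang D)
    (f₂ : B₂ ⟶ A) (g₂ : A ⟶ C₂) (h₂ : C₂ ⟶ B₂⟦(1 : ℤ)⟧)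
    (hT₂ : Triangle.mk f₂ g₂ h₂ ∈ distTriang D) :
    ∃! ψ : C₁ ⟶ C₂, g₁ ≫ ψ = g₂ := by
  have h0 : f₁ ≫ g₂ = 0 := horth _ _ hB₁ hC₂ _
  obtain ⟨ψ, hψ⟩ : ∃ ψ : C₁ ⟶ C₂, g₂ = g₁ ≫ ψ := Triangle.yoneda_exact₂ _ hT₁ g₂ h0
  refine ⟨ψ, hψ.symm, ?_⟩
  intro ψ' hψ'
  have hd : g₁ ≫ (ψ' - ψ) = 0 := by
    simp [Preadditive.comp_sub, hψ', ← hψ]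
  obtain ⟨g, hg⟩ : ∃ g : B₁⟦(1 : ℤ)⟧ ⟶ C₂, ψ' - ψ = h₁ ≫ g := Triangle.yoneda_exact₃ _ hT₁ (ψ' - ψ) hd
  have : g = 0 := horth _ _ (B.shift _ 1 hB₁) hC₂ g
  rw [this, comp_zero] at hg
  rw [sub_eq_zero] at hg
  exact hg

end Aux

/-- For a semiorthogonal pair `(B, C)`, two decomposition triangles
`B₁ → A → C₁ → B₁[1]` and `B₂ → A → C₂ → B₂[1]` of the same object `A` are uniquely
isomorphic: there is a unique `φ : B₁ ⟶ B₂` commuting with the maps to `A` and it is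
an isomorphism, and similarly a unique `ψ : C₁ ⟶ C₂` commuting with the maps from
`A`, which is an isomorphism. -/
theorem decomposition_triangle_unique
    {D : Type u} [Category.{v} D] [HasZeroObject D] [HasShift D ℤ] [Preadditive D]
    [∀ n : ℤ, (shiftFunctor D n).Additive] [Pretriangulated D] [IsTriangulated D]
    (B C : Triangulated.Subcategory D)
    [ObjectProperty.IsClosedUnderIsomorphisms B.P] [ObjectProperty.IsClosedUnderIsomorphisms C.P]
    (horth : ∀ (X Y : D), B.P X → C.P Y → ∀ f : X ⟶ Y, f = 0)
    {A B₁ B₂ C₁ C₂ : D} (hB₁ : B.P B₁) (hB₂ : B.P B₂) (hC₁ : C.P C₁) (hC₂ : C.P C₂)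
    (f₁ : B₁ ⟶ A) (g₁ : A ⟶ C₁) (h₁ : C₁ ⟶ B₁⟦(1 : ℤ)⟧)
    (hT₁ : Triangle.mk f₁ g₁ h₁ ∈ distTriang D)
    (f₂ : B₂ ⟶ A) (g₂ : A ⟶ C₂) (h₂ : C₂ ⟶ B₂⟦(1 : ℤ)⟧)
    (hT₂ : Triangle.mk f₂ g₂ h₂ ∈ distTriang D) :
    (∃! φ : B₁ ⟶ B₂, φ ≫ f₂ = f₁) ∧ (∀ φ : B₁ ⟶ B₂, φ ≫ f₂ = f₁ → IsIso φ) ∧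
    (∃! ψ : C₁ ⟶ C₂, g₁ ≫ ψ = g₂) ∧ (∀ ψ : C₁ ⟶ C₂, g₁ ≫ ψ = g₂ → IsIso ψ) := by
  have E12 := aux_phi B C horth hB₁ hC₂ f₁ g₁ h₁ hT₁ f₂ g₂ h₂ hT₂
  have E21 := aux_phi B C horth hB₂ hC₁ f₂ g₂ h₂ hT₂ f₁ g₁ h₁ hT₁
  have E11 := aux_phi B C horth hB₁ hC₁ f₁ g₁ h₁ hT₁ f₁ g₁ h₁ hT₁
  have E22 := aux_phi B C horth hB₂ hC₂ f₂ g₂ h₂ hT₂ f₂ g₂ h₂ hT₂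
  have F12 := aux_psi B C horth hB₁ hC₂ f₁ g₁ h₁ hT₁ f₂ g₂ h₂ hT₂
  have F21 := aux_psi B C horth hB₂ hC₁ f₂ g₂ h₂ hT₂ f₁ g₁ h₁ hT₁
  have F11 := aux_psi B C horth hB₁ hC₁ f₁ g₁ h₁ hT₁ f₁ g₁ h₁ hT₁
  have F22 := aux_psi B C horth hB₂ hC₂ f₂ g₂ h₂ hT₂ f₂ g₂ h₂ hT₂
  refine ⟨E12, ?_, F12, ?_⟩
  · intro φ hφ
    obtain ⟨φ', hφ', _⟩ := E21
    have h1 : φ ≫ φ' = 𝟙 B₁ := by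
      have := E11.unique (y₁ := φ ≫ φ') (y₂ := 𝟙 B₁)
        (by rw [Category.assoc, hφ', hφ]) (by simp)
      exact this
    have h2 : φ' ≫ φ = 𝟙 B₂ := by
      exact E22.unique (y₁ := φ' ≫ φ) (y₂ := 𝟙 B₂)
        (by rw [Category.assoc, hφ, hφ']) (by simp)
    exact ⟨φ', h1, h2⟩
  · intro ψ hψ
    obtain ⟨ψ', hψ', _⟩ := F21
    have h1 : ψ ≫ ψ' = 𝟙 C₁ := by
      exact F11.unique (y₁ := ψ ≫ ψ') (y₂ := 𝟙 C₁)
        (by rw [← Category.assoc, hψ, hψ']) (by simp)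
    have h2 : ψ' ≫ ψ = 𝟙 C₂ := by
      exact F22.unique (y₁ := ψ' ≫ ψ) (y₂ := 𝟙 C₂)
        (by rw [← Category.assoc, hψ', hψ]) (by simp)
    exact ⟨ψ', h1, h2⟩
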